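/- arXiv:2209.05399 — 2 statements merged into one kernel-verified Lean document; each statement's English description precedes it below -/
import Mathlib

section
/- Window representation of the subsampling estimator: Let n ∈ ℤ⁺ and let {ℓ_i}_{i=1}^n be positive integers with ℓ_i ≤ i such that t ↦ t − ℓ_t is monotonically increasing. For i, j ∈ {1,…,n} define I_n(i,j) := {t ∈ {1,…,n} : i, j ∈ {t − ℓ_t + 1, …, t}}, f_n(i) := max{t ∈ {1,…,n} : i ∈ {t − ℓ_t + 1, …, t}}, and b_n(i) := f_n(i) − i + 1. Then (i) |I_n(i,j)| = (b_n(i∧j) − |i−j|) · 1{|i−j| ≤ b_n(i∧j)} for all i, j; and (ii) for any real numbers X_1, …, X_n, the subsampling estimator σ̂²_{n,sub} = [Σ_{i=1}^n (Σ_{j=i−ℓ_i+1}^i X_j − ℓ_i X̄_n)²] / [Σ_{i=1}^n ℓ_i] equals the quadratic form n^{-1} Σ_{i=1}^n Σ_{j=1}^n W_sub(i,j)(X_i − X̄_n)(X_j − X̄_n), where W_sub(i,j) = (1 − (|i−j| + ℓ̄_n − b_n(i∧j))/ℓ̄_n) · 1{|i−j| ≤ b_n(i∧j)} and ℓ̄_n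 = n^{-1} Σ_{i=1}^n ℓ_i. -/
open MeasureTheory ProbabilityTheory Filter Finset Asymptotics
open scoped ENNReal NNReal Topology

noncomputable section

/-- A (two-sided) stationary causal process `X_i = g(…, ε_{i-1}, ε_i)` driven by an i.i.d.
innovation sequence `ε`, together with an independent copy `ε none` of the innovations used
to define the coupled process. -/
structure CausalProcess (Ω : Type*) [MeasurableSpace Ω] (μ : Measure Ω) where
  ε : Option ℤ → Ω → ℝ
  g : (ℕ → ℝ) → ℝ
  meas_g : Measurable g
  meas_ε : ∀ i, Measurable (ε i)
  indep : iIndepFun ε μ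
  ident : ∀ i j, μ.map (ε i) = μ.map (ε j)

namespace CausalProcess

variable {Ω : Type*} [MeasurableSpace Ω] {μ : Measure Ω} (P : CausalProcess Ω μ)

/-- `X_i = g(F_i)` where `F_i = (…, ε_{i-1}, ε_i)`. -/
def X (i : ℤ) : Ω → ℝ := fun ω => P.g fun k => P.ε (some (i - k)) ω

/-- The coupled version `X_{i,{0}}` of `X_i`, in which `ε_0` is replaced by the copy `ε'_0`. -/
def Xc (i : ℤ) : Ω → ℝ := fun ω =>
  P.g fun k => if i - (k : ℤ) = 0 then P.ε none ω else P.ε (some (i - k)) ω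

/-- Physical dependence measure `δ_{i,p} = ‖X_i − X_{i,{0}}‖_p`. -/
def delta (p : ℝ) (i : ℕ) : ℝ≥0∞ :=
  eLpNorm (fun ω => P.X i ω - P.Xc i ω) (ENNReal.ofReal p) μ

/-- `Δ_p = Σ_{i=0}^∞ δ_{i,p}`. -/
def Delta (p : ℝ) : ℝ≥0∞ := ∑' i : ℕ, P.delta p i

/-- The mean `μ = E(X_0)` of the stationary process. -/
def mean : ℝ := ∫ ω, P.X 0 ω ∂μ

/-- Autocovariance `γ_k = E{(X_0 − μ)(X_k − μ)}`. -/
def acov (k : ℤ) : ℝ := ∫ ω, (P.X 0 ω - P.mean) * (P.X k ω - P.mean) ∂μ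

/-- Long-run variance `σ² = Σ_{k∈ℤ} γ_k`. -/
def lrv : ℝ := ∑' k : ℤ, P.acov k

/-- Sample mean `X̄_n`. -/
def sampleMean (n : ℕ) (ω : Ω) : ℝ := (n : ℝ)⁻¹ * ∑ i ∈ Finset.Icc 1 n, P.X (i : ℤ) ω

/-- The quadratic-form long-run variance estimator `σ̂_n²(W)`. -/
def quadEst (W : ℕ → ℕ → ℕ → ℝ) (n : ℕ) (ω : Ω) : ℝ :=
  (n : ℝ)⁻¹ * ∑ i ∈ Finset.Icc 1 n, ∑ j ∈ Finset.Icc 1 n,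
    W n i j * (P.X (i : ℤ) ω - P.sampleMean n ω) * (P.X (j : ℤ) ω - P.sampleMean n ω)

/-- `w_{n,k} = n^{-1} Σ_{i=k+1}^n W_n(i, i−k)`. -/
def wnk (W : ℕ → ℕ → ℕ → ℝ) (n k : ℕ) : ℝ :=
  (n : ℝ)⁻¹ * ∑ i ∈ Finset.Icc (k + 1) n, W n i (i - k)

/-- Triangular-form estimator built from a sequence `Y` (used for the known-mean, the
`m`-dependent and the martingale-difference versions of the estimator). -/
def triEst (W : ℕ → ℕ → ℕ → ℝ) (Y : ℤ → Ω → ℝ) (n : ℕ) (ω : Ω) : ℝ :=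
  (n : ℝ)⁻¹ * ∑ i ∈ Finset.Icc 1 n, (Y (i : ℤ) ω) ^ 2
    + 2 * (n : ℝ)⁻¹ * ∑ i ∈ Finset.Icc 2 n, ∑ j ∈ Finset.Icc 1 (i - 1),
        W n i j * Y (i : ℤ) ω * Y (j : ℤ) ω

/-- Triangular-form estimator with estimated (sample) mean. -/
def triHat (W : ℕ → ℕ → ℕ → ℝ) (n : ℕ) (ω : Ω) : ℝ :=
  (n : ℝ)⁻¹ * ∑ i ∈ Finset.Icc 1 n, (P.X (i : ℤ) ω - P.sampleMean n ω) ^ 2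
    + 2 * (n : ℝ)⁻¹ * ∑ i ∈ Finset.Icc 2 n, ∑ j ∈ Finset.Icc 1 (i - 1),
        W n i j * (P.X (i : ℤ) ω - P.sampleMean n ω) * (P.X (j : ℤ) ω - P.sampleMean n ω)

/-- The σ-algebra `F_i = σ(ε_j : j ≤ i)`. -/
def filt (i : ℤ) : MeasurableSpace Ω :=
  MeasurableSpace.comap (fun ω (k : ℕ) => P.ε (some (i - k)) ω) inferInstance

/-- The coupled σ-algebra `F_{i,{0}}` in which `ε_0` is replaced by the copy `ε'_0`. -/
def filtC (i : ℤ) : MeasurableSpace Ω :=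
  MeasurableSpace.comap
    (fun ω (k : ℕ) => if i - (k : ℤ) = 0 then P.ε none ω else P.ε (some (i - k)) ω)
    inferInstance

/-- The σ-algebra `σ(ε_{i−m}, …, ε_i)`. -/
def recentSigma (m : ℕ) (i : ℤ) : MeasurableSpace Ω :=
  MeasurableSpace.comap (fun ω (k : Fin (m + 1)) => P.ε (some (i - (k : ℕ))) ω) inferInstance

/-- `X̃_i = E(X_i | ε_{i−m}, …, ε_i)`, the `m`-dependent approximation of the process. -/
def mdepX (m : ℕ) (i : ℤ) : Ω → ℝ := μ[P.X i | P.recentSigma m i]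

/-- `M_i = Σ_{h=0}^∞ E(X̃_{i+h} | F_i)`. -/
def martM (m : ℕ) (i : ℤ) : Ω → ℝ := fun ω => ∑' h : ℕ, (μ[P.mdepX m (i + h) | P.filt i]) ω

/-- `D_i = M_i − E(M_i | F_{i−1})`, the approximating martingale differences. -/
def martD (m : ℕ) (i : ℤ) : Ω → ℝ :=
  fun ω => P.martM m i ω - (μ[P.martM m i | P.filt (i - 1)]) ω

/-- Predictive dependence measure `ω_{j,p} = ‖E(X_j|F_0) − E(X_j|F_{0,{0}})‖_p`. -/
def omegaDep (p : ℝ) (j : ℕ) : ℝ≥0∞ :=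
  eLpNorm (fun ω => (μ[P.X (j : ℤ) | P.filt 0]) ω - (μ[P.X (j : ℤ) | P.filtC 0]) ω)
    (ENNReal.ofReal p) μ

/-- `v_q = Σ_{k∈ℤ} |k|^q γ_k`. -/
def vq (q : ℕ) : ℝ := ∑' k : ℤ, (|k| : ℝ) ^ q * P.acov k

/-- Variance of a real statistic. -/
def varInt (f : Ω → ℝ) : ℝ := ∫ ω, (f ω - ∫ ω', f ω' ∂μ) ^ 2 ∂μ

/-- `Υ_{m,p} = (Σ_{i=m}^∞ δ_{i,p}²)^{1/2}`. -/
def Upsilon (p : ℝ) (m : ℕ) : ℝ≥0∞ := (∑' i : ℕ, (P.delta p (m + i)) ^ 2) ^ (1 / 2 : ℝ)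

/-- `d_{m,p} = Σ_{i=0}^∞ min(δ_{i,p}, Υ_{m+1,p})`. -/
def dTrunc (p : ℝ) (m : ℕ) : ℝ≥0∞ := ∑' i : ℕ, min (P.delta p i) (P.Upsilon p (m + 1))

/-- The exponent conditions (a)/(b) of Definition winLASER, with `α' = min(α/2, 2)`;
in case (b), `q̃` is the order of serial dependence in Assumption `u_{q̃} < ∞`. -/
def ExponentCond (α : ℝ) (q : ℕ) (ψ θ : ℝ) : Prop :=
  (0 < ψ ∧ ψ ≤ θ ∧ θ < min (2 - 2 / min (α / 2) 2) (1 / (1 + (q : ℝ))))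
    ∨ (0 < ψ ∧ ψ < min (2 - 2 / min (α / 2) 2) (1 / (1 + (q : ℝ))) ∧
        ∃ qt : ℕ, 0 < qt ∧ Summable (fun k : ℤ => (|k| : ℝ) ^ qt * |P.acov k|) ∧
          max (ψ + (ψ - 2 + 2 / min (α / 2) 2) / (2 * (q : ℝ)))
              (((q : ℝ) - (qt : ℝ)) * ψ / (q : ℝ)) < θ ∧ θ < ψ)

end CausalProcess

namespace LASER

/-- Intended subsampling parameter `s_n = min(⌊Ψ n^ψ⌋, n−1)`. -/
def sN (Ψ ψ : ℝ) (n : ℕ) : ℕ := min ⌊Ψ * (n : ℝ) ^ ψ⌋₊ (n - 1)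

/-- Tapering parameter `t_n = min(⌈Θ n^θ⌉, n)`. -/
def tN (Θ θ : ℝ) (n : ℕ) : ℕ := min ⌈Θ * (n : ℝ) ^ θ⌉₊ n

/-- Ramped (effective) subsampling parameter `s'_n`. -/
def rampS (Ψ ψ φ : ℝ) : ℕ → ℕ
  | 0 => 0
  | n + 1 =>
      if sN Ψ ψ n ≤ rampS Ψ ψ φ n + 1 ∧ ((rampS Ψ ψ φ n : ℝ) + 1 < φ * (sN Ψ ψ n : ℝ)) then
        rampS Ψ ψ φ n + 1
      else sN Ψ ψ (n + 1)

/-- The LASER(q,φ) window `W(i,j) = (1 − |i−j|^q/t_n^q) 1{|i−j| ≤ s'_{i∨j}}`. -/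
def W (q : ℕ) (Ψ ψ φ Θ θ : ℝ) (n i j : ℕ) : ℝ :=
  if max i j - min i j ≤ rampS Ψ ψ φ (max i j) then
    1 - ((max i j - min i j : ℕ) : ℝ) ^ q / ((tN Θ θ n : ℝ)) ^ q
  else 0

/-- The constant `𝒱_{ψ,Ψ,θ,Θ,q,φ}` in the exact variance rate of LASER(q,φ). -/
def Vconst (ψ Ψ θ Θ : ℝ) (q : ℕ) (φ : ℝ) : ℝ :=
  if 1 < φ then
    (if ψ ≤ θ then 2 * Ψ * (φ + 1) / (ψ + 1) else 0)
      - (if ψ = θ then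
          8 * Ψ ^ (q + 1) / Θ ^ q * (φ ^ (q + 2) - 1)
            / ((φ - 1) * ((q : ℝ) + 1) * ((q : ℝ) + 2) * (ψ * q + ψ + 1)) else 0)
      + (if θ ≤ ψ then
          2 * Ψ ^ (2 * q + 1) / Θ ^ (2 * q) * (φ ^ (2 * q + 2) - 1)
            / ((φ - 1) * ((q : ℝ) + 1) * (2 * (q : ℝ) + 1) * (2 * ψ * q + ψ + 1)) else 0)
  else
    (if ψ ≤ θ then 4 * Ψ / (ψ + 1) else 0)
      - (if ψ = θ then
          8 * Ψ ^ (q + 1) / Θ ^ q / (((q : ℝ) + 1) * (ψ * q + ψ + 1)) else 0)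
      + (if θ ≤ ψ then
          4 * Ψ ^ (2 * q + 1) / Θ ^ (2 * q) / ((2 * (q : ℝ) + 1) * (2 * ψ * q + ψ + 1)) else 0)

/-- Number of ramps `ν_k` in the `k`-th block (case `φ > 1`). -/
def blockNu (Ψ ψ φ : ℝ) (k : ℕ) : ℕ :=
  ⌈(1 / ((φ - 1) * ψ)) * (1 / Ψ) ^ (1 / ψ) * (k : ℝ) ^ (1 / ψ - 2)⌉₊

/-- Width `ϖ_k` of a ramp in the `k`-th block. -/
def blockW (φ : ℝ) (k : ℕ) : ℕ := ⌈(φ - 1) * (k : ℝ)⌉₊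

/-- Starting point `η_k` of the `k`-th block. -/
def blockEta (Ψ ψ φ : ℝ) (k : ℕ) : ℕ :=
  if 1 < φ then 1 + ∑ h ∈ Finset.Ico 1 k, blockW φ h * blockNu Ψ ψ φ h
  else ⌈((k : ℝ) / Ψ) ^ (1 / ψ)⌉₊

end LASER

/-- `G_{1,n}` of Assumption 2. -/
def winG1 (W : ℕ → ℕ → ℕ → ℝ) (n : ℕ) : ℝ :=
  ⨆ i ∈ Finset.Icc 1 n, ∑ j ∈ Finset.Icc 1 n, (|W n i j| + (W n i j) ^ 2)

/-- `G_{2,n}` of Assumption 2, with `αp = α' = min(α/2, 2)`. -/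
def winG2 (W : ℕ → ℕ → ℕ → ℝ) (αp : ℝ) (n : ℕ) : ℝ :=
  (⨆ i ∈ Finset.Icc 1 n, ⨆ j ∈ Finset.Icc 1 n, |W n i j|)
    + ⨆ i ∈ Finset.Icc 1 n,
        (∑ j ∈ Finset.Icc 2 n, |W n i j - W n i (j - 1)| ^ αp) ^ (1 / αp)

/-- `G_{3,n}`. -/
def winG3 (W : ℕ → ℕ → ℕ → ℝ) (n : ℕ) : ℝ :=
  ∑ i ∈ Finset.Icc 2 n, (∑ j ∈ Finset.Icc 1 (i - 1), W n i j) ^ 2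
    + ∑ j ∈ Finset.Icc 1 (n - 1), (∑ i ∈ Finset.Icc (j + 1) n, W n i j) ^ 2

/-- `G_{4,n}`. -/
def winG4 (W : ℕ → ℕ → ℕ → ℝ) (n : ℕ) : ℝ :=
  |∑ i ∈ Finset.Icc 2 n, ∑ j ∈ Finset.Icc 1 (i - 1), W n i j|

/-- `G_{5,n}`. -/
def winG5 (W : ℕ → ℕ → ℕ → ℝ) (n : ℕ) : ℝ :=
  ⨆ i ∈ Finset.Icc 1 n, ∑ j ∈ Finset.Icc 1 n, ((W n i j) ^ 2 + (W n j i) ^ 2)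

/-- `G_{6,n}`, with `αp = α' = min(α/2, 2)`. -/
def winG6 (W : ℕ → ℕ → ℕ → ℝ) (αp : ℝ) (n : ℕ) : ℝ :=
  (⨆ i ∈ Finset.Icc 1 n, ⨆ j ∈ Finset.Icc 1 n, |W n i j|)
    + ⨆ i ∈ Finset.Icc 1 n,
        (∑ j ∈ Finset.Icc 2 n,
          (|W n j i - W n (j - 1) i| ^ αp + |W n i j - W n i (j - 1)| ^ αp)) ^ (1 / αp)

/-- Assumption 2 (summability of window). -/
def WindowSummable (W : ℕ → ℕ → ℕ → ℝ) (α : ℝ) : Prop :=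
  ((fun n => winG1 W n) =o[Filter.atTop] fun n => (n : ℝ) ^ (2 - 2 / min (α / 2) 2))
    ∧ ∃ c ∈ Set.Ioo (0 : ℝ) (1 - 1 / min (α / 2) 2),
        (fun n => winG2 W (min (α / 2) 2) n) =o[Filter.atTop] fun n => (n : ℝ) ^ c

/-- Symmetry of the window on `{1,…,n}²`. -/
def WindowSymm (W : ℕ → ℕ → ℕ → ℝ) : Prop :=
  ∀ n, ∀ i ∈ Finset.Icc 1 n, ∀ j ∈ Finset.Icc 1 n, W n i j = W n j i

/-- `f_n(i) = max{t ∈ {1,…,n} : i ∈ {t − ℓ_t + 1, …, t}}`. -/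
def fEnd (ℓ : ℕ → ℕ) (n i : ℕ) : ℕ :=
  ((Finset.Icc 1 n).filter fun t => t + 1 ≤ i + ℓ t ∧ i ≤ t).sup id

/-- `b_n(i) = f_n(i) − i + 1`. -/
def bEnd (ℓ : ℕ → ℕ) (n i : ℕ) : ℕ := fEnd ℓ n i - i + 1

/-- `ℓ̄_n = n^{-1} Σ_{i=1}^n ℓ_i`. -/
def ellBar (ℓ : ℕ → ℕ) (n : ℕ) : ℝ := (n : ℝ)⁻¹ * ∑ i ∈ Finset.Icc 1 n, (ℓ i : ℝ)

/-- The subsampling window `W_sub`. -/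
def Wsub (ℓ : ℕ → ℕ) (n i j : ℕ) : ℝ :=
  if max i j - min i j ≤ bEnd ℓ n (min i j) then
    1 - (((max i j - min i j : ℕ) : ℝ) + ellBar ℓ n - (bEnd ℓ n (min i j) : ℝ)) / ellBar ℓ n
  else 0

/-- The parallelogrammatic (PSR) window `W_PSR`. -/
def Wpsr (ℓ : ℕ → ℕ) (n i j : ℕ) : ℝ :=
  if max i j - min i j ≤ ℓ (max i j) then
    1 - (((max i j - min i j : ℕ) : ℝ) + ellBar ℓ n - (ℓ (max i j) : ℝ)) / ellBar ℓ n
  else 0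

section Aux

variable {n : ℕ} {ℓ : ℕ → ℕ}

lemma windowSet_eq (hpos : ∀ i, 1 ≤ i → 1 ≤ ℓ i)
    (hle : ∀ i, ℓ i ≤ i) (hmono : Monotone fun t => t - ℓ t)
    {i : ℕ} (hi1 : 1 ≤ i) (hin : i ≤ n) :
    ((Finset.Icc 1 n).filter fun t => t + 1 ≤ i + ℓ t ∧ i ≤ t)
      = Finset.Icc i (fEnd ℓ n i) := by
  have hmem : i ∈ (Finset.Icc 1 n).filter fun t => t + 1 ≤ i + ℓ t ∧ i ≤ t := by
    simp only [Finset.mem_filter, Finset.mem_Icc]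
    exact ⟨⟨hi1, hin⟩, by have := hpos i hi1; omega, le_rfl⟩
  obtain ⟨f, hf, hfeq⟩ := Finset.exists_mem_eq_sup _ ⟨i, hmem⟩ id
  have hfe : fEnd ℓ n i = f := hfeq
  simp only [Finset.mem_filter, Finset.mem_Icc] at hf
  ext t
  simp only [Finset.mem_filter, Finset.mem_Icc, hfe]
  constructor
  · rintro ⟨⟨h1, h2⟩, h3, h4⟩
    refine ⟨h4, ?_⟩
    have := Finset.le_sup (f := id)
      (show t ∈ (Finset.Icc 1 n).filter fun t => t + 1 ≤ i + ℓ t ∧ i ≤ t by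
        simp only [Finset.mem_filter, Finset.mem_Icc]; exact ⟨⟨h1, h2⟩, h3, h4⟩)
    exact le_trans this (le_of_eq hfeq)
  · rintro ⟨h1, h2⟩
    have hmt : t - ℓ t ≤ f - ℓ f := hmono h2
    have hlt := hle t
    have hlf := hle f
    exact ⟨⟨by omega, by omega⟩, by omega, h1⟩

lemma self_le_fEnd (hpos : ∀ i, 1 ≤ i → 1 ≤ ℓ i)
    {i : ℕ} (hi1 : 1 ≤ i) (hin : i ≤ n) : i ≤ fEnd ℓ n i := by
  apply Finset.le_sup (f := id)
  simp only [Finset.mem_filter, Finset.mem_Icc]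
  exact ⟨⟨hi1, hin⟩, by have := hpos i hi1; omega, le_rfl⟩

lemma inter_card (hpos : ∀ i, 1 ≤ i → 1 ≤ ℓ i)
    (hle : ∀ i, ℓ i ≤ i) (hmono : Monotone fun t => t - ℓ t)
    {i j : ℕ} (hi1 : 1 ≤ i) (hij : i ≤ j) (hjn : j ≤ n) :
    ((Finset.Icc 1 n).filter fun t =>
        (t + 1 ≤ i + ℓ t ∧ i ≤ t) ∧ (t + 1 ≤ j + ℓ t ∧ j ≤ t)).card
      = fEnd ℓ n i + 1 - j := by
  have hin : i ≤ n := le_trans hij hjn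
  have hj1 : 1 ≤ j := le_trans hi1 hij
  rw [Finset.filter_and, windowSet_eq hpos hle hmono hi1 hin,
    windowSet_eq hpos hle hmono hj1 hjn]
  have hint : Finset.Icc i (fEnd ℓ n i) ∩ Finset.Icc j (fEnd ℓ n j)
      = Finset.Icc j (min (fEnd ℓ n i) (fEnd ℓ n j)) := by
    ext t
    simp only [Finset.mem_inter, Finset.mem_Icc, le_min_iff]
    omega
  rw [hint]
  have hifi : i ≤ fEnd ℓ n i := self_le_fEnd hpos hi1 hin
  rcases le_or_gt j (fEnd ℓ n i) with hcase | hcase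
  · -- then fEnd i ≤ fEnd j
    have hfi : fEnd ℓ n i ∈ Finset.Icc i (fEnd ℓ n i) := by
      simp [hifi]
    rw [← windowSet_eq hpos hle hmono hi1 hin] at hfi
    simp only [Finset.mem_filter, Finset.mem_Icc] at hfi
    have hmem : fEnd ℓ n i ∈ Finset.Icc j (fEnd ℓ n j) := by
      rw [← windowSet_eq hpos hle hmono hj1 hjn]
      simp only [Finset.mem_filter, Finset.mem_Icc]
      exact ⟨hfi.1, by omega, hcase⟩
    simp only [Finset.mem_Icc] at hmem
    rw [Nat.card_Icc, min_eq_left hmem.2]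
  · rw [Nat.card_Icc]
    have := min_le_left (fEnd ℓ n i) (fEnd ℓ n j)
    omega

lemma card_I (hpos : ∀ i, 1 ≤ i → 1 ≤ ℓ i)
    (hle : ∀ i, ℓ i ≤ i) (hmono : Monotone fun t => t - ℓ t)
    {i j : ℕ} (hi1 : 1 ≤ i) (hin : i ≤ n) (hj1 : 1 ≤ j) (hjn : j ≤ n) :
    ((Finset.Icc 1 n).filter fun t =>
        (t + 1 ≤ i + ℓ t ∧ i ≤ t) ∧ (t + 1 ≤ j + ℓ t ∧ j ≤ t)).card
      = if max i j - min i j ≤ bEnd ℓ n (min i j)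
        then bEnd ℓ n (min i j) - (max i j - min i j) else 0 := by
  rcases le_total i j with hij | hij
  · rw [inter_card hpos hle hmono hi1 hij hjn, max_eq_right hij, min_eq_left hij]
    have := self_le_fEnd hpos hi1 (le_trans hij hjn)
    unfold bEnd
    split_ifs <;> omega
  · have hcomm : ((Finset.Icc 1 n).filter fun t =>
        (t + 1 ≤ i + ℓ t ∧ i ≤ t) ∧ (t + 1 ≤ j + ℓ t ∧ j ≤ t))
        = ((Finset.Icc 1 n).filter fun t =>
        (t + 1 ≤ j + ℓ t ∧ j ≤ t) ∧ (t + 1 ≤ i + ℓ t ∧ i ≤ t)) := by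
      apply Finset.filter_congr; intro t _; constructor <;> exact fun h => ⟨h.2, h.1⟩
    rw [hcomm, inter_card hpos hle hmono hj1 hij hin, max_eq_left hij, min_eq_right hij]
    have := self_le_fEnd hpos hj1 (le_trans hij hin)
    unfold bEnd
    split_ifs <;> omega

end Aux

/-- window representation of the subsampling estimator. -/
theorem subsampling_window_representation
    (n : ℕ) (hn : 1 ≤ n) (ℓ : ℕ → ℕ)
    (hpos : ∀ i, 1 ≤ i → 1 ≤ ℓ i) (hle : ∀ i, ℓ i ≤ i)
    (hmono : Monotone fun t => t - ℓ t)
    (X : ℕ → ℝ) :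
    (∀ i ∈ Finset.Icc 1 n, ∀ j ∈ Finset.Icc 1 n,
      ((Finset.Icc 1 n).filter fun t =>
          (t + 1 ≤ i + ℓ t ∧ i ≤ t) ∧ (t + 1 ≤ j + ℓ t ∧ j ≤ t)).card
        = if max i j - min i j ≤ bEnd ℓ n (min i j)
          then bEnd ℓ n (min i j) - (max i j - min i j) else 0) ∧
    ((∑ i ∈ Finset.Icc 1 n, (∑ j ∈ Finset.Icc (i + 1 - ℓ i) i, X j
          - (ℓ i : ℝ) * ((n : ℝ)⁻¹ * ∑ l ∈ Finset.Icc 1 n, X l)) ^ 2)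
        / (∑ i ∈ Finset.Icc 1 n, (ℓ i : ℝ))
      = (n : ℝ)⁻¹ * ∑ i ∈ Finset.Icc 1 n, ∑ j ∈ Finset.Icc 1 n,
          Wsub ℓ n i j * (X i - (n : ℝ)⁻¹ * ∑ l ∈ Finset.Icc 1 n, X l)
            * (X j - (n : ℝ)⁻¹ * ∑ l ∈ Finset.Icc 1 n, X l)) := by
  constructor
  · intro i hi j hj
    simp only [Finset.mem_Icc] at hi hj
    exact card_I hpos hle hmono hi.1 hi.2 hj.1 hj.2
  · have hn0 : (n : ℝ) ≠ 0 := Nat.cast_ne_zero.2 (by omega)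
    set Y : ℕ → ℝ := fun j => X j - (n : ℝ)⁻¹ * ∑ l ∈ Finset.Icc 1 n, X l with hY
    set c : ℕ → ℕ → ℕ := fun j k => ((Finset.Icc 1 n).filter fun t =>
        (t + 1 ≤ j + ℓ t ∧ j ≤ t) ∧ (t + 1 ≤ k + ℓ t ∧ k ≤ t)).card with hc
    have hLn : (n : ℕ) ≤ ∑ i ∈ Finset.Icc 1 n, ℓ i := by
      calc (n : ℕ) = ∑ i ∈ Finset.Icc 1 n, 1 := by simp
        _ ≤ ∑ i ∈ Finset.Icc 1 n, ℓ i :=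
          Finset.sum_le_sum fun i hi => hpos i (Finset.mem_Icc.1 hi).1
    have hLpos : (0 : ℝ) < ∑ i ∈ Finset.Icc 1 n, (ℓ i : ℝ) := by
      have h1 : ((∑ i ∈ Finset.Icc 1 n, ℓ i : ℕ) : ℝ) = ∑ i ∈ Finset.Icc 1 n, (ℓ i : ℝ) := by
        push_cast; rfl
      rw [← h1]
      exact_mod_cast lt_of_lt_of_le hn hLn
    have hbar : 0 < ellBar ℓ n := by
      unfold ellBar
      apply mul_pos _ hLpos
      rw [inv_pos]
      exact_mod_cast lt_of_lt_of_le Nat.zero_lt_one hn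
    have hnum : ∑ i ∈ Finset.Icc 1 n, (∑ j ∈ Finset.Icc (i + 1 - ℓ i) i, X j
          - (ℓ i : ℝ) * ((n : ℝ)⁻¹ * ∑ l ∈ Finset.Icc 1 n, X l)) ^ 2
        = ∑ j ∈ Finset.Icc 1 n, ∑ k ∈ Finset.Icc 1 n, (c j k : ℝ) * (Y j * Y k) := by
      have step1 : ∀ i ∈ Finset.Icc 1 n,
          (∑ j ∈ Finset.Icc (i + 1 - ℓ i) i, X j
              - (ℓ i : ℝ) * ((n : ℝ)⁻¹ * ∑ l ∈ Finset.Icc 1 n, X l))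
            = ∑ j ∈ Finset.Icc 1 n, if i + 1 ≤ j + ℓ i ∧ j ≤ i then Y j else 0 := by
        intro i hi
        simp only [Finset.mem_Icc] at hi
        have hw : Finset.Icc (i + 1 - ℓ i) i
            = (Finset.Icc 1 n).filter fun j => i + 1 ≤ j + ℓ i ∧ j ≤ i := by
          ext j
          simp only [Finset.mem_filter, Finset.mem_Icc]
          have h1 := hle i
          have h2 := hpos i hi.1
          omega
        rw [← Finset.sum_filter, ← hw]
        have hcard : (Finset.Icc (i + 1 - ℓ i) i).card = ℓ i := by
          rw [Nat.card_Icc]; have := hle i; omega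
        simp only [hY]
        rw [Finset.sum_sub_distrib, Finset.sum_const, hcard, nsmul_eq_mul]
      calc ∑ i ∈ Finset.Icc 1 n, (∑ j ∈ Finset.Icc (i + 1 - ℓ i) i, X j
              - (ℓ i : ℝ) * ((n : ℝ)⁻¹ * ∑ l ∈ Finset.Icc 1 n, X l)) ^ 2
          = ∑ i ∈ Finset.Icc 1 n, ∑ j ∈ Finset.Icc 1 n, ∑ k ∈ Finset.Icc 1 n,
              (if (i + 1 ≤ j + ℓ i ∧ j ≤ i) ∧ (i + 1 ≤ k + ℓ i ∧ k ≤ i)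
                then Y j * Y k else 0) := by
            refine Finset.sum_congr rfl fun i hi => ?_
            rw [step1 i hi, sq, Finset.sum_mul_sum]
            refine Finset.sum_congr rfl fun j _ => Finset.sum_congr rfl fun k _ => ?_
            rw [ite_zero_mul_ite_zero]
        _ = ∑ j ∈ Finset.Icc 1 n, ∑ k ∈ Finset.Icc 1 n, (c j k : ℝ) * (Y j * Y k) := by
            rw [Finset.sum_comm]
            refine Finset.sum_congr rfl fun j _ => ?_
            rw [Finset.sum_comm]
            refine Finset.sum_congr rfl fun k _ => ?_
            rw [← Finset.sum_filter, Finset.sum_const, nsmul_eq_mul]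
    have hW : ∀ i ∈ Finset.Icc 1 n, ∀ j ∈ Finset.Icc 1 n,
        Wsub ℓ n i j = (c i j : ℝ) / ellBar ℓ n := by
      intro i hi j hj
      simp only [Finset.mem_Icc] at hi hj
      have hcij : c i j = if max i j - min i j ≤ bEnd ℓ n (min i j)
          then bEnd ℓ n (min i j) - (max i j - min i j) else 0 :=
        card_I hpos hle hmono hi.1 hi.2 hj.1 hj.2
      unfold Wsub
      split_ifs with h
      · rw [if_pos h] at hcij
        rw [hcij, Nat.cast_sub h]
        field_simp
        ring
      · rw [if_neg h] at hcij
        rw [hcij]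
        simp
    calc (∑ i ∈ Finset.Icc 1 n, (∑ j ∈ Finset.Icc (i + 1 - ℓ i) i, X j
            - (ℓ i : ℝ) * ((n : ℝ)⁻¹ * ∑ l ∈ Finset.Icc 1 n, X l)) ^ 2)
          / (∑ i ∈ Finset.Icc 1 n, (ℓ i : ℝ))
        = (∑ j ∈ Finset.Icc 1 n, ∑ k ∈ Finset.Icc 1 n, (c j k : ℝ) * (Y j * Y k))
            / (∑ i ∈ Finset.Icc 1 n, (ℓ i : ℝ)) := by rw [hnum]
      _ = (n : ℝ)⁻¹ * ((ellBar ℓ n)⁻¹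
            * ∑ j ∈ Finset.Icc 1 n, ∑ k ∈ Finset.Icc 1 n, (c j k : ℝ) * (Y j * Y k)) := by
          have hL : (∑ i ∈ Finset.Icc 1 n, (ℓ i : ℝ)) = (n : ℝ) * ellBar ℓ n := by
            unfold ellBar
            field_simp
          rw [hL]
          field_simp
      _ = (n : ℝ)⁻¹ * ∑ i ∈ Finset.Icc 1 n, ∑ j ∈ Finset.Icc 1 n,
            Wsub ℓ n i j * Y i * Y j := by
          congr 1
          rw [Finset.mul_sum]
          refine Finset.sum_congr rfl fun i hi => ?_
          rw [Finset.mul_sum]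
          refine Finset.sum_congr rfl fun j hj => ?_
          rw [hW i hi j hj]
          field_simp
end
end

section
/- Exteriorization identity for polynomial tapers (core of the O(1)-time update proposition): Let {X_i} be a real sequence, r ∈ ℕ₀, and let {s_i ∈ ℕ₀} satisfy s_i ≤ i − 1. Define K_{i,r} := Σ_{k=0}^{s_i} (2 − 1{k=0}) k^r X_{i−k} and P_{i,u} := Σ_{j=1}^i j^u X_j (with P_{0,u} = 0). Then for every i ∈ ℤ⁺: K_{i,r} = 0^r X_i + 2 Σ_{u=0}^r C(r,u) i^{r−u} (−1)^u ( P_{i−1,u} − P_{i−s_i−1,u} ), where C(r,u) is the binomial coefficient and 0^r is interpreted as 1 when r = 0 and 0 when r ≥ 1. -/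
open MeasureTheory ProbabilityTheory Filter Finset Asymptotics
open scoped ENNReal NNReal Topology

noncomputable section

/-- `P_{i,u} = Σ_{j=1}^i j^u X_j`. -/
def Pcomp (X : ℕ → ℝ) (i u : ℕ) : ℝ := ∑ j ∈ Finset.Icc 1 i, (j : ℝ) ^ u * X j

/-- `K_{i,r} = Σ_{k=0}^{s_i} (2 − 1{k=0}) k^r X_{i−k}`. -/
def Kgen (X : ℕ → ℝ) (s : ℕ → ℕ) (i r : ℕ) : ℝ :=
  ∑ k ∈ Finset.Icc 0 (s i), ((2 : ℝ) - if k = 0 then 1 else 0) * (k : ℝ) ^ r * X (i - k)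

/-- exteriorization identity for polynomial tapers. -/
theorem exteriorization_identity
    (X : ℕ → ℝ) (s : ℕ → ℕ) (hub : ∀ i, 1 ≤ i → s i ≤ i - 1) (r : ℕ)
    (i : ℕ) (hi : 1 ≤ i) :
    Kgen X s i r = (0 : ℝ) ^ r * X i
      + 2 * ∑ u ∈ Finset.range (r + 1),
          (r.choose u : ℝ) * (i : ℝ) ^ (r - u) * (-1 : ℝ) ^ u
            * (Pcomp X (i - 1) u - Pcomp X (i - s i - 1) u) := by

  have hs : s i ≤ i - 1 := hub i hi
  unfold Kgen Pcomp
  have h0 : Finset.Icc 0 (s i) = insert 0 (Finset.Icc 1 (s i)) := by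
    ext k; simp; omega
  rw [h0, Finset.sum_insert (by simp)]
  have hL : ∀ k ∈ Finset.Icc 1 (s i),
      ((2:ℝ) - if k = 0 then 1 else 0) * (k:ℝ)^r * X (i - k)
        = 2 * (k:ℝ)^r * X (i - k) := by
    intro k hk
    simp only [Finset.mem_Icc] at hk
    rw [if_neg (by omega)]; ring
  rw [Finset.sum_congr rfl hL]
  have hP : ∀ u, (∑ j ∈ Finset.Icc 1 (i-1), (j:ℝ)^u * X j)
      - (∑ j ∈ Finset.Icc 1 (i - s i - 1), (j:ℝ)^u * X j)
      = ∑ j ∈ Finset.Icc (i - s i) (i - 1), (j:ℝ)^u * X j := by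
    intro u
    have hsplit : Finset.Icc 1 (i - 1)
        = Finset.Icc 1 (i - s i - 1) ∪ Finset.Icc (i - s i) (i - 1) := by
      ext j; simp; omega
    have hdisj : Disjoint (Finset.Icc 1 (i - s i - 1)) (Finset.Icc (i - s i) (i - 1)) := by
      rw [Finset.disjoint_left]; intro j h1 h2
      simp only [Finset.mem_Icc] at h1 h2; omega
    rw [hsplit, Finset.sum_union hdisj]; ring
  simp only [hP]
  have himg : Finset.Icc (i - s i) (i - 1) = (Finset.Icc 1 (s i)).image (fun k => i - k) := by
    ext j
    simp only [Finset.mem_image, Finset.mem_Icc]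
    constructor
    · intro h; exact ⟨i - j, by omega, by omega⟩
    · rintro ⟨k, hk, rfl⟩; omega
  have hinj : ∀ x ∈ Finset.Icc 1 (s i), ∀ y ∈ Finset.Icc 1 (s i),
      i - x = i - y → x = y := by
    intro x hx y hy h
    simp only [Finset.mem_Icc] at hx hy; omega
  simp only [Finset.mul_sum, himg, Finset.sum_image hinj]
  rw [Finset.sum_comm]
  congr 1
  · norm_num
  · apply Finset.sum_congr rfl
    intro k hk
    simp only [Finset.mem_Icc] at hk
    have hki : k ≤ i := by omega
    have hcast : ((i - k : ℕ) : ℝ) = (i : ℝ) - (k : ℝ) := by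
      push_cast [Nat.cast_sub hki]; ring
    have hbin : ∑ u ∈ Finset.range (r + 1),
        (r.choose u : ℝ) * (i : ℝ) ^ (r - u) * (-1 : ℝ) ^ u * ((i - k : ℕ) : ℝ) ^ u
        = (k : ℝ) ^ r := by
      have := add_pow (-(((i - k : ℕ) : ℝ))) ((i : ℝ)) r
      have hk' : (-(((i - k : ℕ) : ℝ)) + (i : ℝ)) = (k : ℝ) := by rw [hcast]; ring
      rw [hk'] at this
      rw [this]
      apply Finset.sum_congr rfl
      intro u hu
      rw [neg_pow]
      ring
    rw [mul_assoc, ← hbin, Finset.sum_mul, Finset.mul_sum]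
    apply Finset.sum_congr rfl; intro u _; ring
end
end
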